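/- If h : (0,∞) → (0,∞) is differentiable with h' completely monotone, then 1/h is completely monotone. -/

import Mathlib

open Real Set

/-- A function is completely monotone on `(0, ∞)` if it is infinitely differentiable there
and `(-1)^n f^(n)(x) ≥ 0` for all `n ≥ 0` and `x > 0`. -/
def CompletelyMonotoneOn (f : ℝ → ℝ) : Prop :=
  (∀ x : ℝ, 0 < x → ContDiffAt ℝ ((⊤ : ℕ∞) : WithTop ℕ∞) f x) ∧
    ∀ (n : ℕ) (x : ℝ), 0 < x → 0 ≤ (-1 : ℝ) ^ n * iteratedDeriv n f x

private lemma itw_eq_it {f : ℝ → ℝ} {n : ℕ} {x : ℝ} (hx : x ∈ Ioi (0 : ℝ)) :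
    iteratedDerivWithin n f (Ioi 0) x = iteratedDeriv n f x := by
  rw [iteratedDerivWithin_eq_iteratedFDerivWithin, iteratedDeriv_eq_iteratedFDeriv,
    iteratedFDerivWithin_of_isOpen n isOpen_Ioi hx]

/-- "Partially completely monotone": smooth on `(0,∞)` with sign conditions up to order `n`. -/
private def PCM (n : ℕ) (f : ℝ → ℝ) : Prop :=
  ContDiffOn ℝ ((⊤ : ℕ∞) : WithTop ℕ∞) f (Ioi 0) ∧
    ∀ k ≤ n, ∀ x ∈ Ioi (0 : ℝ), 0 ≤ (-1 : ℝ) ^ k * iteratedDerivWithin k f (Ioi 0) x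

private lemma nat_le_infty (n : ℕ) : (n : WithTop ℕ∞) ≤ ((⊤ : ℕ∞) : WithTop ℕ∞) := by
  exact_mod_cast (le_top : (n : ℕ∞) ≤ ⊤)

private lemma infty_succ_le : ((⊤ : ℕ∞) : WithTop ℕ∞) + 1 ≤ ((⊤ : ℕ∞) : WithTop ℕ∞) := by
  simp

private lemma PCM.mono {m n : ℕ} {f : ℝ → ℝ} (h : PCM n f) (hmn : m ≤ n) : PCM m f :=
  ⟨h.1, fun k hk => h.2 k (hk.trans hmn)⟩

private lemma PCM_negderiv {n : ℕ} {f : ℝ → ℝ} (hf : PCM (n + 1) f) :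
    PCM n (fun y => -derivWithin f (Ioi 0) y) := by
  have hU : UniqueDiffOn ℝ (Ioi (0 : ℝ)) := uniqueDiffOn_Ioi 0
  constructor
  · exact (hf.1.derivWithin hU infty_succ_le).neg
  · intro k hk x hx
    rw [iteratedDerivWithin_fun_neg, ← iteratedDerivWithin_succ']
    have h1 := hf.2 (k + 1) (by omega) x hx
    have h2 : (-1 : ℝ) ^ k * -iteratedDerivWithin (k + 1) f (Ioi 0) x =
        (-1 : ℝ) ^ (k + 1) * iteratedDerivWithin (k + 1) f (Ioi 0) x := by
      rw [pow_succ]; ring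
    rw [h2]; exact h1

private lemma PCM_mul : ∀ n : ℕ, ∀ f g : ℝ → ℝ, PCM n f → PCM n g →
    PCM n (fun y => f y * g y) := by
  have hU : UniqueDiffOn ℝ (Ioi (0 : ℝ)) := uniqueDiffOn_Ioi 0
  intro n
  induction n with
  | zero =>
    intro f g hf hg
    refine ⟨hf.1.mul hg.1, ?_⟩
    intro k hk x hx
    interval_cases k
    simp only [pow_zero, one_mul, iteratedDerivWithin_zero]
    have h1 := hf.2 0 le_rfl x hx
    have h2 := hg.2 0 le_rfl x hx
    simp only [pow_zero, one_mul, iteratedDerivWithin_zero] at h1 h2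
    positivity
  | succ n IH =>
    intro f g hf hg
    refine ⟨hf.1.mul hg.1, ?_⟩
    intro k hk x hx
    by_cases hk' : k ≤ n
    · exact (IH f g (hf.mono (Nat.le_succ n)) (hg.mono (Nat.le_succ n))).2 k hk' x hx
    have hkeq : k = n + 1 := by omega
    subst hkeq
    rw [iteratedDerivWithin_succ']
    set f' : ℝ → ℝ := derivWithin f (Ioi 0) with hf'def
    set g' : ℝ → ℝ := derivWithin g (Ioi 0) with hg'def
    have hEq : EqOn (derivWithin (fun y => f y * g y) (Ioi 0))
        ((fun y => f' y * g y) + fun y => f y * g' y) (Ioi 0) := by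
      intro y hy
      have hdf : DifferentiableWithinAt ℝ f (Ioi 0) y :=
        (hf.1.differentiableOn (by simp)) y hy
      have hdg : DifferentiableWithinAt ℝ g (Ioi 0) y :=
        (hg.1.differentiableOn (by simp)) y hy
      exact derivWithin_fun_mul hdf hdg
    rw [iteratedDerivWithin_congr hEq hx]
    have hCf' : ContDiffOn ℝ ((⊤ : ℕ∞) : WithTop ℕ∞) (fun y => f' y * g y) (Ioi 0) :=
      (hf.1.derivWithin hU infty_succ_le).mul hg.1
    have hCg' : ContDiffOn ℝ ((⊤ : ℕ∞) : WithTop ℕ∞) (fun y => f y * g' y) (Ioi 0) :=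
      hf.1.mul (hg.1.derivWithin hU infty_succ_le)
    rw [iteratedDerivWithin_add hx hU ((hCf'.of_le (nat_le_infty n)).contDiffWithinAt hx)
      ((hCg'.of_le (nat_le_infty n)).contDiffWithinAt hx)]
    -- rewrite each term with a minus sign
    have e1 : (fun y => f' y * g y) = fun y => -((fun z => -f' z * g z) y) := by
      funext y; ring
    have e2 : (fun y => f y * g' y) = fun y => -((fun z => f z * -g' z) y) := by
      funext y; ring
    have r1 : iteratedDerivWithin n (fun y => f' y * g y) (Ioi 0) x =
        -iteratedDerivWithin n (fun z => -f' z * g z) (Ioi 0) x := by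
      rw [e1, iteratedDerivWithin_fun_neg]
    have r2 : iteratedDerivWithin n (fun y => f y * g' y) (Ioi 0) x =
        -iteratedDerivWithin n (fun z => f z * -g' z) (Ioi 0) x := by
      rw [e2, iteratedDerivWithin_fun_neg]
    have hA : 0 ≤ (-1 : ℝ) ^ n * iteratedDerivWithin n (fun z => -f' z * g z) (Ioi 0) x := by
      have hP1 : PCM n (fun z => -f' z) := PCM_negderiv hf
      have := (IH _ _ hP1 (hg.mono (Nat.le_succ n))).2 n le_rfl x hx
      simpa using this
    have hB : 0 ≤ (-1 : ℝ) ^ n * iteratedDerivWithin n (fun z => f z * -g' z) (Ioi 0) x := by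
      have hP2 : PCM n (fun z => -g' z) := PCM_negderiv hg
      have := (IH _ _ (hf.mono (Nat.le_succ n)) hP2).2 n le_rfl x hx
      simpa using this
    rw [r1, r2]
    have hring : (-1 : ℝ) ^ (n + 1) *
        (-iteratedDerivWithin n (fun z => -f' z * g z) (Ioi 0) x +
          -iteratedDerivWithin n (fun z => f z * -g' z) (Ioi 0) x) =
        (-1 : ℝ) ^ n * iteratedDerivWithin n (fun z => -f' z * g z) (Ioi 0) x +
          (-1 : ℝ) ^ n * iteratedDerivWithin n (fun z => f z * -g' z) (Ioi 0) x := by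
      rw [pow_succ]; ring
    rw [hring]
    linarith

theorem completelyMonotone_inv_of_deriv_completelyMonotone
    (h : ℝ → ℝ) (hpos : ∀ x : ℝ, 0 < x → 0 < h x)
    (hdiff : ∀ x : ℝ, 0 < x → DifferentiableAt ℝ h x)
    (hder : CompletelyMonotoneOn (deriv h)) :
    CompletelyMonotoneOn (fun x : ℝ => 1 / h x) := by
  have hU : UniqueDiffOn ℝ (Ioi (0 : ℝ)) := uniqueDiffOn_Ioi 0
  have hCh : ContDiffOn ℝ ((⊤ : ℕ∞) : WithTop ℕ∞) h (Ioi 0) := by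
    rw [contDiffOn_infty_iff_deriv_of_isOpen isOpen_Ioi]
    exact ⟨fun x hx => (hdiff x hx).differentiableWithinAt,
      fun x hx => (hder.1 x hx).contDiffWithinAt⟩
  have hCg : ContDiffOn ℝ ((⊤ : ℕ∞) : WithTop ℕ∞) (fun x : ℝ => 1 / h x) (Ioi 0) := by
    simp only [one_div]
    exact hCh.inv fun x hx => (hpos x hx).ne'
  have hPh' : ∀ n, PCM n (deriv h) := fun n =>
    ⟨fun x hx => (hder.1 x hx).contDiffWithinAt,
      fun k _ x hx => by rw [itw_eq_it hx]; exact hder.2 k x hx⟩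
  have key : ∀ n : ℕ, PCM n (fun x : ℝ => 1 / h x) := by
    intro n
    induction n with
    | zero =>
      refine ⟨hCg, ?_⟩
      intro k hk x hx
      interval_cases k
      simp only [pow_zero, one_mul, iteratedDerivWithin_zero]
      have := hpos x hx
      positivity
    | succ n IH =>
      refine ⟨hCg, ?_⟩
      intro k hk x hx
      by_cases hk' : k ≤ n
      · exact IH.2 k hk' x hx
      have hkeq : k = n + 1 := by omega
      subst hkeq
      rw [iteratedDerivWithin_succ']
      have hEq : EqOn (derivWithin (fun x : ℝ => 1 / h x) (Ioi 0))
          (fun y => -((fun z => deriv h z * ((1 / h z) * (1 / h z))) y)) (Ioi 0) := by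
        intro y hy
        rw [derivWithin_of_isOpen isOpen_Ioi hy]
        have h1 : deriv (fun x : ℝ => 1 / h x) y = -deriv h y / h y ^ 2 := by
          simp only [one_div]
          exact deriv_inv'' (hdiff y hy) (hpos y hy).ne'
        rw [h1]
        have hy0 : h y ≠ 0 := (hpos y hy).ne'
        field_simp
      rw [iteratedDerivWithin_congr hEq hx, iteratedDerivWithin_fun_neg]
      have hq : PCM n (fun z => deriv h z * ((1 / h z) * (1 / h z))) :=
        PCM_mul n _ _ (hPh' n) (PCM_mul n _ _ IH IH)
      have hs := hq.2 n le_rfl x hx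
      have hring : (-1 : ℝ) ^ (n + 1) *
          -iteratedDerivWithin n (fun z => deriv h z * (1 / h z * (1 / h z))) (Ioi 0) x =
          (-1 : ℝ) ^ n *
            iteratedDerivWithin n (fun z => deriv h z * (1 / h z * (1 / h z))) (Ioi 0) x := by
        rw [pow_succ]; ring
      rw [hring]
      exact hs
  constructor
  · exact fun x hx => hCg.contDiffAt (isOpen_Ioi.mem_nhds hx)
  · intro n x hx
    have := (key n).2 n le_rfl x hx
    rwa [itw_eq_it hx] at this
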